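/- Let ρ = Σ_j p_j |ψ_j⟩⟨ψ_j| and σ = Σ_k q_k |φ_k⟩⟨φ_k| be density matrices on a finite-dimensional complex Hilbert space, where the ψ_j and φ_k are unit vectors (not necessarily orthogonal) and p_j, q_k ≥ 0 with Σ_j p_j = Σ_k q_k = 1. Then Φ(ρ,σ) ≤ Σ_{j,k} p_j q_k Φ(|ψ_j⟩⟨ψ_j|, |φ_k⟩⟨φ_k|). -/

import Mathlib

open Matrix ComplexOrder

/-- The incompatibility measure Φ(ρ,σ) := 2‖[ρ,σ]‖²_HS = 2·Tr([ρ,σ]†[ρ,σ]). -/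
noncomputable def Phi {n : ℕ} (ρ σ : Matrix (Fin n) (Fin n) ℂ) : ℝ :=
  2 * (((ρ * σ - σ * ρ)ᴴ * (ρ * σ - σ * ρ)).trace).re

/-- The rank-one projection |ψ⟩⟨ψ| associated to a (unit) vector ψ. -/
def pureState {n : ℕ} (ψ : Fin n → ℂ) : Matrix (Fin n) (Fin n) ℂ :=
  vecMulVec ψ (star ψ)

noncomputable def toE {n : ℕ} : Matrix (Fin n) (Fin n) ℂ →ₗ[ℂ] EuclideanSpace ℂ (Fin n × Fin n) where
  toFun A := WithLp.toLp 2 (fun p : Fin n × Fin n => A p.1 p.2)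
  map_add' A B := rfl
  map_smul' c A := rfl

lemma trace_re_eq_norm_sq {n : ℕ} (A : Matrix (Fin n) (Fin n) ℂ) :
    ((Aᴴ * A).trace).re = ‖toE A‖ ^ 2 := by
  rw [EuclideanSpace.norm_eq, Real.sq_sqrt (Finset.sum_nonneg fun i _ => sq_nonneg _)]
  simp only [Matrix.trace, Matrix.diag, Matrix.mul_apply, Matrix.conjTranspose_apply]
  rw [Complex.re_sum]
  simp only [Complex.re_sum]
  rw [Fintype.sum_prod_type]
  rw [Finset.sum_comm]
  congr 1; ext i; congr 1; ext k
  simp [toE, Complex.star_def, Complex.mul_conj', Complex.sq_norm,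
    Complex.normSq_apply]
  rfl

theorem phi_ensemble_convexity {n : ℕ} {J K : Type*} [Fintype J] [Fintype K]
    (p : J → ℝ) (q : K → ℝ) (ψ : J → (Fin n → ℂ)) (φ : K → (Fin n → ℂ))
    (hp : ∀ j, 0 ≤ p j) (hq : ∀ k, 0 ≤ q k)
    (hp1 : ∑ j, p j = 1) (hq1 : ∑ k, q k = 1)
    (hψ : ∀ j, star (ψ j) ⬝ᵥ ψ j = 1) (hφ : ∀ k, star (φ k) ⬝ᵥ φ k = 1)
    (ρ σ : Matrix (Fin n) (Fin n) ℂ)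
    (hρ : ρ = ∑ j, (p j : ℂ) • pureState (ψ j))
    (hσ : σ = ∑ k, (q k : ℂ) • pureState (φ k)) :
    Phi ρ σ ≤ ∑ j, ∑ k, p j * q k * Phi (pureState (ψ j)) (pureState (φ k)) := by
  classical
  set E := EuclideanSpace ℂ (Fin n × Fin n)
  -- commutator decomposition
  have hcomm : ρ * σ - σ * ρ = ∑ x : J × K, ((p x.1 * q x.2 : ℝ) : ℂ) •
      (pureState (ψ x.1) * pureState (φ x.2) - pureState (φ x.2) * pureState (ψ x.1)) := by
    subst hρ hσ
    rw [Finset.sum_mul_sum, Finset.sum_mul_sum,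
      Finset.sum_comm (s := (Finset.univ : Finset K)) (t := (Finset.univ : Finset J))
        (f := fun i j => (q i : ℂ) • pureState (φ i) * (p j : ℂ) • pureState (ψ j)),
      ← Finset.sum_sub_distrib, Fintype.sum_prod_type]
    refine Finset.sum_congr rfl fun j _ => ?_
    rw [← Finset.sum_sub_distrib]
    refine Finset.sum_congr rfl fun k _ => ?_
    rw [smul_sub, smul_mul_assoc, mul_smul_comm, smul_smul, smul_mul_assoc, mul_smul_comm,
      smul_smul, mul_comm ((q k : ℂ))]
    push_cast
    ring_nf
  -- toE linearity over the sum
  have htoE : toE (ρ * σ - σ * ρ) = ∑ x : J × K,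
      (p x.1 * q x.2) • toE (pureState (ψ x.1) * pureState (φ x.2)
        - pureState (φ x.2) * pureState (ψ x.1)) := by
    rw [hcomm, map_sum]
    refine Finset.sum_congr rfl fun x _ => ?_
    rw [_root_.map_smul, Complex.coe_smul]
  have hconv : ConvexOn ℝ Set.univ (fun x : E => ‖x‖ ^ 2) := by
    refine ⟨convex_univ, fun x _ y _ a b ha hb hab => ?_⟩
    have h1 : ‖a • x + b • y‖ ≤ a * ‖x‖ + b * ‖y‖ := by
      calc ‖a • x + b • y‖ ≤ ‖a • x‖ + ‖b • y‖ := norm_add_le _ _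
        _ = a * ‖x‖ + b * ‖y‖ := by rw [norm_smul, norm_smul,
            Real.norm_of_nonneg ha, Real.norm_of_nonneg hb]
    have h2 : ‖a • x + b • y‖ ^ 2 ≤ (a * ‖x‖ + b * ‖y‖) ^ 2 :=
      pow_le_pow_left₀ (norm_nonneg _) h1 2
    simp only [smul_eq_mul]
    nlinarith [sq_nonneg (‖x‖ - ‖y‖), mul_nonneg ha hb, norm_nonneg x, norm_nonneg y]
  have hjensen := hconv.map_sum_le (t := Finset.univ)
      (w := fun x : J × K => p x.1 * q x.2)
      (p := fun x : J × K => toE (pureState (ψ x.1) * pureState (φ x.2)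
        - pureState (φ x.2) * pureState (ψ x.1)))
      (fun x _ => mul_nonneg (hp x.1) (hq x.2))
      (by rw [Fintype.sum_prod_type]; simp [← Finset.mul_sum, hq1, hp1])
      (fun x _ => Set.mem_univ _)
  unfold Phi
  rw [trace_re_eq_norm_sq, htoE]
  calc 2 * ‖∑ x : J × K, (p x.1 * q x.2) • toE _‖ ^ 2
      ≤ 2 * ∑ x : J × K, (p x.1 * q x.2) * ‖toE (pureState (ψ x.1) * pureState (φ x.2)
        - pureState (φ x.2) * pureState (ψ x.1))‖ ^ 2 := by
        apply mul_le_mul_of_nonneg_left hjensen (by norm_num)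
    _ = ∑ j, ∑ k, p j * q k * Phi (pureState (ψ j)) (pureState (φ k)) := by
        rw [Finset.mul_sum, Fintype.sum_prod_type]
        apply Finset.sum_congr rfl; intro j _
        apply Finset.sum_congr rfl; intro k _
        rw [Phi, trace_re_eq_norm_sq]; ring
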